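/- Let ω be a symmetric (2,2)-double form on V, let (e₁,…,e_n) be the orthonormal basis of V used in defining the Weitzenböck transformations, and let 1 ≤ p ≤ n−1. Then N_p(ω)(e₁∧…∧e_p, e₁∧…∧e_p) = N_{n−p}(ω)(e_{p+1}∧…∧e_n, e_{p+1}∧…∧e_n). (This is the identity of sectional curvatures expressed by the duality ∗N_p(ω) = N_{n−p}(ω) under the Hodge star operator.) -/

import Mathlib

open scoped BigOperators RealInnerProductSpace

namespace Weitzenbock

variable (V : Type) [NormedAddCommGroup V] [InnerProductSpace ℝ V]

/-- A "raw" double form of bidegree `(p,q)`: a real-valued function of a `p`-tuple and a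
`q`-tuple of vectors.  A genuine double form (an `ℝ`-bilinear form on `⋀ᵖV × ⋀^qV`) is the
same thing as such a function which is multilinear and alternating in each block of
arguments; this regularity is encoded by the type `DF` below. -/
abbrev DFr (p q : ℕ) : Type _ := (Fin p → V) → (Fin q → V) → ℝ

/-- A double form of bidegree `(p,q)` on `V`: an alternating multilinear map in `p` vector
arguments with values in alternating multilinear maps in `q` vector arguments; this is
exactly the data of a bilinear form `⋀ᵖV × ⋀^qV → ℝ`. -/
abbrev DF (p q : ℕ) : Type _ :=
  AlternatingMap ℝ V (AlternatingMap ℝ V ℝ (Fin q)) (Fin p)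

variable {V}

/-- The underlying raw double form of a double form. -/
def rawDF {p q : ℕ} (ω : DF V p q) : DFr V p q := fun x y => ω x y

/-- Transport a raw double form along equalities of the degrees. -/
def castDF {a b c d : ℕ} (h1 : a = b) (h2 : c = d) (ω : DFr V a c) : DFr V b d :=
  fun x y => ω (fun i => x (Fin.cast h1 i)) (fun j => y (Fin.cast h2 j))

/-- The Kulkarni–Nomizu product of double forms (in raw form):
`(ω₁·ω₂)(x₁∧…∧x_{p+r}, y₁∧…∧y_{q+s}) = (1/(p!r!q!s!)) Σ_{σ,ρ} ε(σ)ε(ρ)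
ω₁(x_{σ(1)}∧…∧x_{σ(p)}, y_{ρ(1)}∧…∧y_{ρ(q)}) ω₂(x_{σ(p+1)}∧…, y_{ρ(q+1)}∧…)`. -/
noncomputable def KN (p r q s : ℕ) (ω₁ : DFr V p q) (ω₂ : DFr V r s) :
    DFr V (p + r) (q + s) := fun x y =>
  ((p.factorial * r.factorial * q.factorial * s.factorial : ℕ) : ℝ)⁻¹ *
    ∑ σ : Equiv.Perm (Fin (p + r)), ∑ ρ : Equiv.Perm (Fin (q + s)),
      ((Equiv.Perm.sign σ : ℤ) : ℝ) * ((Equiv.Perm.sign ρ : ℤ) : ℝ) *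
        (ω₁ (fun a => x (σ (Fin.castAdd r a))) (fun c => y (ρ (Fin.castAdd s c))) *
          ω₂ (fun a => x (σ (Fin.natAdd p a))) (fun c => y (ρ (Fin.natAdd q c))))

/-- The metric `g` as a `(1,1)`-double form. -/
noncomputable def gD : DFr V 1 1 := fun x y => (inner ℝ (x 0) (y 0) : ℝ)

/-- The `k`-th Kulkarni–Nomizu power `g^k` of the metric. -/
noncomputable def gpow : (k : ℕ) → DFr V k k
  | 0 => fun _ _ => 1
  | (k + 1) => KN k 1 k 1 (gpow k) gD

/-- A raw `(p,p)`-double form is symmetric if `ω(u,v) = ω(v,u)`. -/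
def Symm (p : ℕ) (ω : DFr V p p) : Prop := ∀ x y, ω x y = ω y x

/-- The first Bianchi identity for a double form of bidegree `(p, q+1)`:
`Σ_{j=1}^{p+1} (−1)^j ω(x₁∧…∧x̂_j∧…∧x_{p+1}, x_j∧y₁∧…∧y_q) = 0`. -/
def Bianchi (p q : ℕ) (ω : DFr V p (q + 1)) : Prop :=
  ∀ (x : Fin (p + 1) → V) (y : Fin q → V),
    ∑ j : Fin (p + 1),
      (-1 : ℝ) ^ ((j : ℕ) + 1) * ω (j.removeNth x) (Fin.cons (x j) y) = 0

variable {n : ℕ}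

/-- The contraction of a double form with respect to an orthonormal basis:
`cω(x₁∧…∧x_p, y₁∧…∧y_q) = Σ_j ω(e_j∧x₁∧…∧x_p, e_j∧y₁∧…∧y_q)`. -/
noncomputable def contr (b : OrthonormalBasis (Fin n) ℝ V) (p q : ℕ)
    (ω : DFr V (p + 1) (q + 1)) : DFr V p q := fun x y =>
  ∑ j : Fin n, ω (Fin.cons (b j) x) (Fin.cons (b j) y)

/-- Iterated contraction `c^k`. -/
noncomputable def contrIter (b : OrthonormalBasis (Fin n) ℝ V) (p q : ℕ) :
    (k : ℕ) → DFr V (p + k) (q + k) → DFr V p q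
  | 0, ω => ω
  | (k + 1), ω => contrIter b p q k (contr b (p + k) (q + k) ω)

instance (p m : ℕ) : DecidablePred (fun f : Fin p → Fin m => StrictMono f) := fun f =>
  decidable_of_iff (∀ a b : Fin p, a < b → f a < f b)
    ⟨fun h _ _ hab => h _ _ hab, fun h _ _ hab => h hab⟩

/-- The natural inner product of two `(p,q)`-double forms with respect to an orthonormal
basis: `⟨ω₁,ω₂⟩ = Σ_{I,J increasing} ω₁(e_I,e_J) ω₂(e_I,e_J)`. -/
noncomputable def dfInner (b : OrthonormalBasis (Fin n) ℝ V) (p q : ℕ)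
    (ω₁ ω₂ : DFr V p q) : ℝ :=
  ∑ I : {f : Fin p → Fin n // StrictMono f}, ∑ J : {f : Fin q → Fin n // StrictMono f},
    ω₁ (fun a => b (I.1 a)) (fun c => b (J.1 c)) *
      ω₂ (fun a => b (I.1 a)) (fun c => b (J.1 c))

/-- The quadratic form `v ↦ −⟨v,v⟩` on `V`. -/
noncomputable def Qv : QuadraticForm ℝ V :=
  - LinearMap.BilinMap.toQuadraticMap (innerₗ V)

/-- The Clifford algebra of `(V, −⟨·,·⟩)`; via `CliffordAlgebra.equivExterior` it is
identified, as a vector space, with the exterior algebra `ΛV`. -/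
abbrev CA := CliffordAlgebra (Qv (V := V))

/-- A vector of `V` seen inside the Clifford algebra. -/
noncomputable def cvec (v : V) : CA (V := V) := CliffordAlgebra.ι (Qv (V := V)) v

/-- `ad_φ(ψ) = φ·ψ − ψ·φ` (Clifford products). -/
noncomputable def adC (φ ψ : CA (V := V)) : CA (V := V) := φ * ψ - ψ * φ

/-- The identification of the Clifford algebra with the exterior algebra `ΛV`. -/
noncomputable def toExt : CA (V := V) ≃ₗ[ℝ] ExteriorAlgebra ℝ V :=
  CliffordAlgebra.equivExterior (Qv (V := V))

/-- The scalar (degree zero) part of an element of `ΛV ≅ Cl(V)`. -/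
noncomputable def scalarPart (u : CA (V := V)) : ℝ :=
  ExteriorAlgebra.algebraMapInv (toExt u)

/-- The inner product on `ΛV ≅ Cl(V)` for which the wedge products of distinct vectors of
an orthonormal basis are orthonormal: `⟨u,v⟩` is the scalar part of `reverse(involute u)·v`. -/
noncomputable def cinner (u v : CA (V := V)) : ℝ :=
  scalarPart (CliffordAlgebra.reverse (CliffordAlgebra.involute u) * v)

/-- The `p`-vector `x₁ ∧ … ∧ x_p`, viewed in `ΛV ≅ Cl(V)`. -/
noncomputable def wedgeC (p : ℕ) (x : Fin p → V) : CA (V := V) :=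
  toExt.symm (ExteriorAlgebra.ιMulti ℝ p x)

/-- The Weitzenböck transformation of order `p` of a `(2,2)`-double form `ω`, relative to
the orthonormal basis `b`:
`N_p(ω)(ψ₁,ψ₂) = (1/4) Σ_{i<j} Σ_{k<l} ω(e_i∧e_j, e_k∧e_l) ⟨ad_{e_i·e_j}ψ₁, ad_{e_k·e_l}ψ₂⟩`. -/
noncomputable def Nw (b : OrthonormalBasis (Fin n) ℝ V) (p : ℕ) (ω : DFr V 2 2) :
    DFr V p p := fun x y =>
  (4 : ℝ)⁻¹ *
    ∑ i : Fin n, ∑ j : Fin n, ∑ k : Fin n, ∑ l : Fin n,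
      if i < j ∧ k < l then
        ω ![b i, b j] ![b k, b l] *
          cinner (adC (cvec (b i) * cvec (b j)) (wedgeC p x))
            (adC (cvec (b k) * cvec (b l)) (wedgeC p y))
      else 0

/-- A symmetric `(1,1)`-double form is positive definite if it is positive on every
nonzero vector. -/
def posDef11 (F : DFr V 1 1) : Prop := ∀ v : V, v ≠ 0 → 0 < F (fun _ => v) (fun _ => v)


section DualAux

variable {V : Type} [NormedAddCommGroup V] [InnerProductSpace ℝ V] {n : ℕ}

lemma negpow2 (k : ℕ) : ((-1 : ℝ)) ^ k * ((-1 : ℝ)) ^ k = 1 := by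
  rw [← pow_add, ← two_mul, pow_mul]; norm_num

lemma Qv_apply (v : V) : Qv (V := V) v = -(inner ℝ v v : ℝ) := rfl

variable (b : OrthonormalBasis (Fin n) ℝ V)

/-- Basis vector in the Clifford algebra. -/
noncomputable def ee (i : Fin n) : CA (V := V) := cvec (b i)

/-- Clifford product of a list of basis vectors. -/
noncomputable def eL (L : List (Fin n)) : CA (V := V) := (L.map (ee b)).prod

@[simp] lemma eL_nil : eL b ([] : List (Fin n)) = 1 := rfl

@[simp] lemma eL_cons (a : Fin n) (L : List (Fin n)) :
    eL b (a :: L) = ee b a * eL b L := by simp [eL]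

lemma eL_append (L₁ L₂ : List (Fin n)) : eL b (L₁ ++ L₂) = eL b L₁ * eL b L₂ := by
  simp [eL]

lemma isOrtho_bb {i j : Fin n} (hij : i ≠ j) : QuadraticMap.IsOrtho (Qv (V := V)) (b i) (b j) := by
  have h := b.orthonormal.2 hij
  have h' := b.orthonormal.2 hij.symm
  simp only [QuadraticMap.IsOrtho, Qv_apply, inner_add_add_self]
  rw [h, h']
  ring

lemma ee_sq (i : Fin n) : ee b i * ee b i = -1 := by
  rw [ee, cvec, CliffordAlgebra.ι_sq_scalar]
  have : Qv (V := V) (b i) = -1 := by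
    rw [Qv_apply, real_inner_self_eq_norm_sq, b.orthonormal.1 i]; norm_num
  rw [this, map_neg, map_one]

lemma ee_anti {i j : Fin n} (hij : i ≠ j) : ee b i * ee b j = -(ee b j * ee b i) :=
  CliffordAlgebra.ι_mul_ι_comm_of_isOrtho (isOrtho_bb b hij)

lemma ee_mul_eL (a : Fin n) (L : List (Fin n)) :
    ee b a * eL b L = ((-1 : ℝ) ^ (L.filter (fun x => x ≠ a)).length) • (eL b L * ee b a) := by
  induction L with
  | nil => simp
  | cons x L ih =>
    by_cases hx : x = a
    · subst hx
      have hk : ((x :: L).filter (fun y => y ≠ x)).length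
          = (L.filter (fun y => y ≠ x)).length := by simp
      calc ee b x * eL b (x :: L) = ee b x * (ee b x * eL b L) := by rw [eL_cons]
        _ = ee b x * (((-1 : ℝ) ^ (L.filter (fun y => y ≠ x)).length) •
              (eL b L * ee b x)) := by rw [ih]
        _ = ((-1 : ℝ) ^ (L.filter (fun y => y ≠ x)).length) • (eL b (x :: L) * ee b x) := by
              rw [mul_smul_comm, eL_cons, mul_assoc]
        _ = _ := by rw [hk]
    · have hax : a ≠ x := fun h => hx h.symm
      have hk : ((x :: L).filter (fun y => y ≠ a)).length
          = (L.filter (fun y => y ≠ a)).length + 1 := by simp [hx]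
      calc ee b a * eL b (x :: L) = (ee b a * ee b x) * eL b L := by rw [eL_cons, mul_assoc]
        _ = -(ee b x * (ee b a * eL b L)) := by rw [ee_anti b hax]; simp [mul_assoc]
        _ = -(ee b x * (((-1 : ℝ) ^ (L.filter (fun y => y ≠ a)).length) •
              (eL b L * ee b a))) := by rw [ih]
        _ = ((-1 : ℝ) ^ ((x :: L).filter (fun y => y ≠ a)).length) •
              (eL b (x :: L) * ee b a) := by
              rw [hk, pow_succ, mul_neg_one, neg_smul, mul_smul_comm, eL_cons, mul_assoc]

lemma ee_mul_eL_of_not_mem {a : Fin n} {L : List (Fin n)} (ha : a ∉ L) :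
    ee b a * eL b L = ((-1 : ℝ) ^ L.length) • (eL b L * ee b a) := by
  have hfil : (L.filter (fun x => x ≠ a)) = L := by
    apply List.filter_eq_self.2
    intro x hx
    exact decide_eq_true fun h : x = a => ha (h ▸ hx)
  rw [ee_mul_eL, hfil]

lemma eL_mul_ee_of_not_mem {a : Fin n} {L : List (Fin n)} (ha : a ∉ L) :
    eL b L * ee b a = ((-1 : ℝ) ^ L.length) • (ee b a * eL b L) := by
  rw [ee_mul_eL_of_not_mem b ha, smul_smul, negpow2, one_smul]

lemma rev_eL (L : List (Fin n)) :
    CliffordAlgebra.reverse (eL b L) = eL b L.reverse := by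
  induction L with
  | nil => simp [eL]
  | cons x L ih =>
    rw [eL_cons, CliffordAlgebra.reverse.map_mul, ih, List.reverse_cons, eL_append]
    simp [ee, cvec, CliffordAlgebra.reverse_ι]

lemma inv_eL (L : List (Fin n)) :
    CliffordAlgebra.involute (eL b L) = ((-1 : ℝ) ^ L.length) • eL b L := by
  induction L with
  | nil => simp [eL]
  | cons x L ih =>
    rw [eL_cons, map_mul, ih]
    simp only [ee, cvec, CliffordAlgebra.involute_ι, List.length_cons, pow_succ]
    rw [mul_smul_comm, neg_mul, mul_neg_one, neg_smul, ← smul_neg]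

lemma eLrev_mul (L : List (Fin n)) :
    eL b L.reverse * eL b L = ((-1 : ℝ) ^ L.length) • 1 := by
  induction L with
  | nil => simp
  | cons x L ih =>
    have h1 : eL b [x] * eL b (x :: L) = -eL b L := by
      simp only [eL_cons, eL_nil, mul_one]
      rw [← mul_assoc, ee_sq]
      simp
    rw [List.reverse_cons, eL_append, mul_assoc, h1, List.length_cons, pow_succ,
      mul_neg, ih, mul_neg_one, neg_smul]

lemma eL_reverse_pm {L : List (Fin n)} (hL : L.Nodup) :
    ∃ c : ℝ, c * c = 1 ∧ eL b L.reverse = c • eL b L := by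
  induction L with
  | nil => exact ⟨1, by norm_num, by simp⟩
  | cons x L ih =>
    obtain ⟨c, hc, hrev⟩ := ih hL.of_cons
    have hx : x ∉ L := (List.nodup_cons.1 hL).1
    refine ⟨c * (-1 : ℝ) ^ L.length, ?_, ?_⟩
    · rw [show c * (-1:ℝ)^L.length * (c * (-1)^L.length)
        = (c*c) * ((-1:ℝ)^L.length * (-1)^L.length) by ring, hc, negpow2, one_mul]
    · rw [List.reverse_cons, eL_append, hrev,
        show eL b [x] = ee b x by simp, smul_mul_assoc, eL_mul_ee_of_not_mem b hx,
        smul_smul, eL_cons]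

lemma eL_sq_pm {L : List (Fin n)} (hL : L.Nodup) :
    ∃ c : ℝ, c * c = 1 ∧ eL b L * eL b L = (c : ℝ) • 1 := by
  obtain ⟨c, hc, hrev⟩ := eL_reverse_pm b hL
  have h := eLrev_mul b L
  rw [hrev, smul_mul_assoc] at h
  have h2 := congrArg (fun z => c • z) h
  simp only [smul_smul, hc, one_smul] at h2
  exact ⟨c * (-1:ℝ)^L.length, by
      rw [show c * (-1:ℝ)^L.length * (c * (-1)^L.length)
        = (c*c) * ((-1:ℝ)^L.length * (-1)^L.length) by ring, hc, negpow2, one_mul],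
    h2⟩

end DualAux
section DualAux2

variable {V : Type} [NormedAddCommGroup V] [InnerProductSpace ℝ V] {n : ℕ}
variable (b : OrthonormalBasis (Fin n) ℝ V)

/-- The list of all indices. -/
def OmL : List (Fin n) := List.ofFn (fun i => i)

/-- The volume element of the Clifford algebra. -/
noncomputable def Om : CA (V := V) := eL b (OmL (n := n))

lemma OmL_nodup : (OmL (n := n)).Nodup := List.nodup_ofFn.2 (fun _ _ h => h)

lemma OmL_length : (OmL (n := n)).length = n := by simp [OmL]

lemma ee_mul_Om (a : Fin n) :
    ee b a * Om b = ((-1 : ℝ) ^ (n - 1)) • (Om b * ee b a) := by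
  have hmem : a ∈ (OmL (n := n)) := by simp [OmL, List.mem_ofFn]
  have hfil : ((OmL (n := n)).filter (fun x => x ≠ a)).length = n - 1 := by
    have h1 : (OmL (n := n)).erase a = (OmL (n := n)).filter (fun x => x ≠ a) := by
      rw [List.Nodup.erase_eq_filter OmL_nodup]
      congr 1
      funext x
      by_cases h : x = a <;> simp [h]
    rw [← h1, List.length_erase_of_mem hmem, OmL_length]
  rw [Om, ee_mul_eL, hfil]

lemma eL_mul_Om (M : List (Fin n)) :
    eL b M * Om b = ((-1 : ℝ) ^ (M.length * (n - 1))) • (Om b * eL b M) := by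
  induction M with
  | nil => simp
  | cons x M ih =>
    rw [eL_cons, mul_assoc, ih, mul_smul_comm, ← mul_assoc, ee_mul_Om, smul_mul_assoc,
      smul_smul, List.length_cons, mul_assoc, ← pow_add]
    congr 2
    ring

lemma semicomm_smul {x : CA (V := V)} {m : ℕ} (r : ℝ)
    (hx : x * Om b = ((-1 : ℝ) ^ m) • (Om b * x)) :
    (r • x) * Om b = ((-1 : ℝ) ^ m) • (Om b * (r • x)) := by
  rw [smul_mul_assoc, hx, mul_smul_comm, smul_comm r]

lemma semicomm_mul {x y : CA (V := V)} {m : ℕ}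
    (hx : x * Om b = ((-1 : ℝ) ^ m) • (Om b * x))
    (hy : y * Om b = ((-1 : ℝ) ^ m) • (Om b * y)) :
    (x * y) * Om b = Om b * (x * y) := by
  rw [mul_assoc, hy, mul_smul_comm, ← mul_assoc, hx, smul_mul_assoc, smul_smul, negpow2,
    one_smul, mul_assoc]

lemma semicomm_eL_diff {M₁ M₂ : List (Fin n)} (h : M₁.length = M₂.length) :
    (eL b M₁ - eL b M₂) * Om b
      = ((-1 : ℝ) ^ (M₁.length * (n - 1))) • (Om b * (eL b M₁ - eL b M₂)) := by
  rw [sub_mul, eL_mul_Om, eL_mul_Om, ← h, ← smul_sub, ← mul_sub]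

lemma revinv_eL (M : List (Fin n)) :
    CliffordAlgebra.reverse (CliffordAlgebra.involute (eL b M))
      = ((-1 : ℝ) ^ M.length) • eL b M.reverse := by
  rw [inv_eL, map_smul, rev_eL]

lemma scalarPart_one : scalarPart (1 : CA (V := V)) = 1 := by
  simp [scalarPart, toExt, CliffordAlgebra.equivExterior]

lemma scalarPart_smul (r : ℝ) (u : CA (V := V)) :
    scalarPart (r • u) = r * scalarPart u := by
  simp [scalarPart, map_smul, smul_eq_mul]

lemma cinner_smul_left (r : ℝ) (u v : CA (V := V)) :
    cinner (r • u) v = r * cinner u v := by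
  simp [cinner, map_smul, smul_mul_assoc, scalarPart_smul]

lemma cinner_smul_right (r : ℝ) (u v : CA (V := V)) :
    cinner u (r • v) = r * cinner u v := by
  simp [cinner, mul_smul_comm, scalarPart_smul]

lemma revinv_Om_mul_Om : CliffordAlgebra.reverse (CliffordAlgebra.involute (Om b)) * Om b
    = 1 := by
  rw [Om, revinv_eL, smul_mul_assoc, eLrev_mul, OmL_length, smul_smul, negpow2, one_smul]

lemma cinner_mul_Om (u v : CA (V := V))
    (hw : (CliffordAlgebra.reverse (CliffordAlgebra.involute u) * v) * Om b
        = Om b * (CliffordAlgebra.reverse (CliffordAlgebra.involute u) * v)) :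
    cinner (u * Om b) (v * Om b) = cinner u v := by
  unfold cinner
  rw [map_mul, CliffordAlgebra.reverse.map_mul]
  congr 1
  calc CliffordAlgebra.reverse (CliffordAlgebra.involute (Om b))
        * CliffordAlgebra.reverse (CliffordAlgebra.involute u) * (v * Om b)
      = CliffordAlgebra.reverse (CliffordAlgebra.involute (Om b))
        * ((CliffordAlgebra.reverse (CliffordAlgebra.involute u) * v) * Om b) := by
        rw [mul_assoc, mul_assoc]
    _ = CliffordAlgebra.reverse (CliffordAlgebra.involute (Om b))
        * (Om b * (CliffordAlgebra.reverse (CliffordAlgebra.involute u) * v)) := by rw [hw]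
    _ = (CliffordAlgebra.reverse (CliffordAlgebra.involute (Om b)) * Om b)
        * (CliffordAlgebra.reverse (CliffordAlgebra.involute u) * v) := by rw [mul_assoc]
    _ = CliffordAlgebra.reverse (CliffordAlgebra.involute u) * v := by
        rw [revinv_Om_mul_Om, one_mul]

lemma adC_smul (φ : CA (V := V)) (r : ℝ) (u : CA (V := V)) :
    adC φ (r • u) = r • adC φ u := by
  simp [adC, mul_smul_comm, smul_mul_assoc, smul_sub]

lemma adC_mul_right (φ u : CA (V := V)) (h : φ * Om b = Om b * φ) :
    adC φ (u * Om b) = adC φ u * Om b := by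
  simp only [adC, sub_mul, mul_assoc]
  rw [← h]

lemma pair_comm_Om {i j : Fin n} (_hij : i ≠ j) :
    (ee b i * ee b j) * Om b = Om b * (ee b i * ee b j) := by
  have h := eL_mul_Om b [i, j]
  have hlen : ([i, j] : List (Fin n)).length = 2 := rfl
  have heq : eL b [i, j] = ee b i * ee b j := by simp
  rw [heq, hlen] at h
  rw [h, show ((-1:ℝ))^(2 * (n-1)) = 1 by rw [pow_mul]; norm_num, one_smul]

lemma adC_pair_eL (a a' : Fin n) (S : List (Fin n)) :
    adC (ee b a * ee b a') (eL b S) = eL b (a :: a' :: S) - eL b (S ++ [a, a']) := by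
  simp [adC, eL_append, mul_assoc]

lemma semicomm_adC (a a' : Fin n) (S : List (Fin n)) :
    adC (ee b a * ee b a') (eL b S) * Om b
      = ((-1 : ℝ) ^ ((S.length + 2) * (n - 1))) • (Om b * adC (ee b a * ee b a') (eL b S)) := by
  rw [adC_pair_eL]
  have h := semicomm_eL_diff b (M₁ := a :: a' :: S) (M₂ := S ++ [a, a']) (by simp)
  simpa using h

lemma semicomm_revinv_adC (a a' : Fin n) (S : List (Fin n)) :
    CliffordAlgebra.reverse (CliffordAlgebra.involute (adC (ee b a * ee b a') (eL b S))) * Om b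
      = ((-1 : ℝ) ^ ((S.length + 2) * (n - 1))) •
          (Om b * CliffordAlgebra.reverse (CliffordAlgebra.involute (adC (ee b a * ee b a') (eL b S)))) := by
  rw [adC_pair_eL, map_sub, map_sub, revinv_eL, revinv_eL]
  have hlen1 : (a :: a' :: S).length = S.length + 2 := by simp
  have hlen2 : (S ++ [a, a']).length = S.length + 2 := by simp
  rw [hlen1, hlen2, ← smul_sub]
  apply semicomm_smul
  have h := semicomm_eL_diff b (M₁ := (a :: a' :: S).reverse) (M₂ := (S ++ [a, a']).reverse)
    (by simp)
  rw [List.length_reverse, hlen1] at h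
  exact h

lemma term_eq (S T : List (Fin n)) (hS : S.Nodup)
    (hST : eL b S * eL b T = Om b) {i j k l : Fin n} (hij : i ≠ j) (hkl : k ≠ l) :
    cinner (adC (ee b i * ee b j) (eL b T)) (adC (ee b k * ee b l) (eL b T))
      = cinner (adC (ee b i * ee b j) (eL b S)) (adC (ee b k * ee b l) (eL b S)) := by
  obtain ⟨c, hc, hsq⟩ := eL_sq_pm b hS
  have hT : eL b T = c • (eL b S * Om b) := by
    rw [← hST, ← mul_assoc, hsq, smul_mul_assoc, one_mul, smul_smul, hc, one_smul]
  have key : ∀ (a a' : Fin n), a ≠ a' →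
      adC (ee b a * ee b a') (eL b T) = c • (adC (ee b a * ee b a') (eL b S) * Om b) := by
    intro a a' h
    rw [hT, adC_smul, adC_mul_right b _ _ (pair_comm_Om b h)]
  rw [key i j hij, key k l hkl, cinner_smul_left, cinner_smul_right, ← mul_assoc, hc, one_mul]
  exact cinner_mul_Om b _ _
    (semicomm_mul b (semicomm_revinv_adC b i j S) (semicomm_adC b k l S))

end DualAux2
section DualAux3

variable {V : Type} [NormedAddCommGroup V] [InnerProductSpace ℝ V] {n : ℕ}
variable (b : OrthonormalBasis (Fin n) ℝ V)

lemma toExt_apply (u : CA (V := V)) :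
    toExt (V := V) u = CliffordAlgebra.changeForm
      (CliffordAlgebra.changeForm.associated_neg_proof (Q := Qv (V := V))) u := rfl

lemma B_ortho {x i : Fin n} (h : x ≠ i) :
    QuadraticMap.associated (R := ℝ) (- Qv (V := V)) (b x) (b i) = 0 := by
  have hx := b.orthonormal.2 h
  have hx' := b.orthonormal.2 h.symm
  rw [QuadraticMap.associated_apply]
  have h0 : (- Qv (V := V)) (b x + b i) - (- Qv (V := V)) (b x) - (- Qv (V := V)) (b i) = 0 := by
    simp only [QuadraticMap.neg_apply, Qv_apply, inner_add_add_self]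
    rw [hx, hx']
    ring
  rw [h0, smul_zero]

lemma contract_prod_zero (f : Module.Dual ℝ V) (L : List (Fin n))
    (hf : ∀ i ∈ L, f (b i) = 0) :
    CliffordAlgebra.contractLeft (Q := (0 : QuadraticForm ℝ V)) f
      ((L.map (fun i => ExteriorAlgebra.ι ℝ (b i))).prod) = 0 := by
  induction L with
  | nil =>
    simpa using CliffordAlgebra.contractLeft_one (0 : QuadraticForm ℝ V) f
  | cons x L ih =>
    simp only [List.map_cons, List.prod_cons]
    rw [CliffordAlgebra.contractLeft_ι_mul,
      ih (fun i hi => hf i (List.mem_cons_of_mem _ hi)), hf x List.mem_cons_self]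
    simp

lemma toExt_eL {L : List (Fin n)} (hL : L.Nodup) :
    toExt (V := V) (eL b L) = (L.map (fun i => ExteriorAlgebra.ι ℝ (b i))).prod := by
  induction L with
  | nil => simp [eL, toExt_apply]
  | cons x L ih =>
    have hx : x ∉ L := (List.nodup_cons.1 hL).1
    simp only [eL_cons, List.map_cons, List.prod_cons]
    rw [show ee b x = CliffordAlgebra.ι (Qv (V := V)) (b x) from rfl,
      toExt_apply, CliffordAlgebra.changeForm_ι_mul, ← toExt_apply, ih hL.of_cons]
    rw [contract_prod_zero b _ L (fun i hi => B_ortho b (fun h => hx (by rw [h]; exact hi)))]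
    rw [sub_zero]

lemma wedgeC_eq_eL {p : ℕ} (g : Fin p → Fin n) (hg : Function.Injective g) :
    wedgeC p (fun a => b (g a)) = eL b (List.ofFn g) := by
  apply toExt (V := V) |>.injective
  rw [wedgeC, LinearEquiv.apply_symm_apply, toExt_eL b (List.nodup_ofFn.2 hg),
    ExteriorAlgebra.ιMulti_apply, List.map_ofFn]
  rfl

end DualAux3
variable (V)

set_option maxHeartbeats 1000000 in
/-- `N_p(ω)(e₁∧…∧e_p, e₁∧…∧e_p) = N_{n−p}(ω)(e_{p+1}∧…∧e_n, e_{p+1}∧…∧e_n)`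
for `1 ≤ p ≤ n−1` (the sectional-curvature identity expressing `∗N_p(ω) = N_{n−p}(ω)`). -/
theorem weitzenbock_hodge_dual (n : ℕ) (b : OrthonormalBasis (Fin n) ℝ V)
    (ω : DF V 2 2) (hsym : Symm 2 (rawDF ω))
    (p : ℕ) (hp1 : 1 ≤ p) (hpn : p + 1 ≤ n) :
    Nw b p (rawDF ω)
        (fun a => b (Fin.castLE (by omega) a)) (fun a => b (Fin.castLE (by omega) a)) =
      Nw b (n - p) (rawDF ω)
        (fun a => b (Fin.cast (show p + (n - p) = n by omega) (Fin.natAdd p a)))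
        (fun a => b (Fin.cast (show p + (n - p) = n by omega) (Fin.natAdd p a))) := by
  have hpn' : p ≤ n := by omega
  have hpn2 : p + (n - p) = n := by omega
  have hS : (List.ofFn (fun a : Fin p => Fin.castLE hpn' a)).Nodup :=
    List.nodup_ofFn.2 (Fin.castLE_injective hpn')
  have hg' : Function.Injective (fun a : Fin (n - p) => Fin.cast hpn2 (Fin.natAdd p a)) := by
    intro a a' h
    have h2 := congrArg (fun z : Fin n => (z : ℕ)) h
    simp only [Fin.coe_cast, Fin.coe_natAdd] at h2
    exact Fin.ext (by omega)
  have hw1 : wedgeC p (fun a : Fin p => b (Fin.castLE hpn' a))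
      = eL b (List.ofFn (fun a : Fin p => Fin.castLE hpn' a)) :=
    wedgeC_eq_eL b _ (Fin.castLE_injective hpn')
  have hw2 : wedgeC (n - p) (fun a : Fin (n - p) => b (Fin.cast hpn2 (Fin.natAdd p a)))
      = eL b (List.ofFn (fun a : Fin (n - p) => Fin.cast hpn2 (Fin.natAdd p a))) :=
    wedgeC_eq_eL b _ hg'
  have hcat : List.ofFn (fun a : Fin p => Fin.castLE hpn' a)
      ++ List.ofFn (fun a : Fin (n - p) => Fin.cast hpn2 (Fin.natAdd p a))
      = OmL (n := n) := by
    have h3 := List.ofFn_add (f := fun i : Fin (p + (n - p)) => Fin.cast hpn2 i)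
    have e1 : (fun i : Fin p => Fin.cast hpn2 (Fin.castLE (Nat.le_add_right p (n - p)) i))
        = (fun i : Fin p => Fin.castLE hpn' i) := by
      funext i; ext; simp
    have e2 : List.ofFn (fun i : Fin (p + (n - p)) => Fin.cast hpn2 i) = OmL (n := n) := by
      rw [List.ofFn_congr hpn2]
      have e3 : (fun i : Fin n => Fin.cast hpn2 (Fin.cast hpn2.symm i))
          = fun i : Fin n => i := by
        funext i; ext; simp
      rw [e3, OmL]
    rw [← e2, h3, e1]
  have hST : eL b (List.ofFn (fun a : Fin p => Fin.castLE hpn' a))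
      * eL b (List.ofFn (fun a : Fin (n - p) => Fin.cast hpn2 (Fin.natAdd p a))) = Om b := by
    rw [← eL_append, hcat, Om]
  simp only [Nw]
  refine congrArg (fun z => (4 : ℝ)⁻¹ * z) ?_
  apply Finset.sum_congr rfl; intro i _
  apply Finset.sum_congr rfl; intro j _
  apply Finset.sum_congr rfl; intro k _
  apply Finset.sum_congr rfl; intro l _
  by_cases h : i < j ∧ k < l
  · rw [if_pos h, if_pos h]
    congr 1
    rw [hw1, hw2]
    exact (term_eq b _ _ hS hST (ne_of_lt h.1) (ne_of_lt h.2)).symm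
  · rw [if_neg h, if_neg h]

end Weitzenbock
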